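/- Let t_k = k·T/m for k = 1,…,m, d ≥ 1, and suppose the grid sizes are chosen as N_k = ⌈ t_k^{d/(2(d+1))} · N̄ / Σ_{j=1}^m t_j^{d/(2(d+1))} ⌉ with total budget N̄ ≥ m. Then there is a constant K depending only on T and d such that Σ_{k=1}^m √t_k / N_k^{1/d} ≤ K · m / (N̄/m)^{1/d}, i.e. the optimized allocation achieves the rate 1/(h·(N̄·h)^{1/d}) with h = T/m. -/

import Mathlib

set_option maxHeartbeats 1000000

open Finset Real

theorem grid_size_optimization (d : ℕ) (hd : 1 ≤ d) (T : ℝ) (hT : 0 < T) :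
    ∃ K : ℝ, 0 < K ∧ ∀ m Nbar : ℕ, 1 ≤ m → m ≤ Nbar →
      (∑ k ∈ Finset.Icc 1 m,
          Real.sqrt ((k : ℝ) * T / m) /
            ((Nat.ceil ((((k : ℝ) * T / m) ^ ((d : ℝ) / (2 * (d + 1))) * (Nbar : ℝ)) /
              (∑ j ∈ Finset.Icc 1 m, ((j : ℝ) * T / m) ^ ((d : ℝ) / (2 * (d + 1))))) : ℝ)
              ^ (1 / (d : ℝ))))
        ≤ K * m / (((Nbar : ℝ) / m) ^ (1 / (d : ℝ))) := by
  set C : ℝ := max T 1 with hCdef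
  have hC1 : (1:ℝ) ≤ C := le_max_right _ _
  have hC0 : (0:ℝ) < C := lt_of_lt_of_le one_pos hC1
  refine ⟨C ^ 2, by positivity, ?_⟩
  intro m Nbar hm hmN
  set D : ℝ := (d : ℝ) with hDdef
  have hD1 : (1:ℝ) ≤ D := by rw [hDdef]; exact_mod_cast hd
  have hD0 : (0:ℝ) < D := lt_of_lt_of_le one_pos hD1
  set α : ℝ := D / (2 * (D + 1)) with hαdef
  have hα0 : 0 < α := by positivity
  have hα1 : α ≤ 1 := by
    rw [hαdef, div_le_one (by positivity)]
    nlinarith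
  have hαD : α + α / D = 1 / 2 := by
    rw [hαdef]
    field_simp
  have hm0 : (0:ℝ) < m := by exact_mod_cast hm
  have hN0 : (0:ℝ) < Nbar := by
    have : (1:ℕ) ≤ Nbar := le_trans hm hmN
    exact_mod_cast this
  have ht0 : ∀ k ∈ Finset.Icc 1 m, (0:ℝ) < (k : ℝ) * T / m := by
    intro k hk
    have hk1 : 1 ≤ k := (Finset.mem_Icc.mp hk).1
    have : (0:ℝ) < k := by exact_mod_cast hk1
    exact div_pos (mul_pos this hT) hm0
  have htC : ∀ k ∈ Finset.Icc 1 m, (k : ℝ) * T / m ≤ C := by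
    intro k hk
    have hk2 : k ≤ m := (Finset.mem_Icc.mp hk).2
    have hkm : (k:ℝ) ≤ m := by exact_mod_cast hk2
    have hTle : (k : ℝ) * T / m ≤ T := by
      rw [div_le_iff₀ hm0]
      nlinarith
    exact le_trans hTle (le_max_left _ _)
  set S : ℝ := ∑ j ∈ Finset.Icc 1 m, ((j : ℝ) * T / m) ^ α with hSdef
  have hS0 : 0 < S := by
    apply Finset.sum_pos
    · intro j hj
      exact Real.rpow_pos_of_pos (ht0 j hj) α
    · exact ⟨1, Finset.mem_Icc.mpr ⟨le_refl 1, hm⟩⟩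
  have hSm : S ≤ C * m := by
    have h : S ≤ ∑ _j ∈ Finset.Icc 1 m, C := by
      apply Finset.sum_le_sum
      intro j hj
      calc ((j : ℝ) * T / m) ^ α ≤ C ^ α :=
            Real.rpow_le_rpow (ht0 j hj).le (htC j hj) hα0.le
        _ ≤ C ^ (1:ℝ) := Real.rpow_le_rpow_of_exponent_le hC1 hα1
        _ = C := Real.rpow_one C
    calc S ≤ ∑ _j ∈ Finset.Icc 1 m, C := h
      _ = C * m := by
        rw [Finset.sum_const, Nat.card_Icc]
        simp [mul_comm]
  -- per-term bound
  have key : ∀ k ∈ Finset.Icc 1 m,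
      Real.sqrt ((k : ℝ) * T / m) /
          ((Nat.ceil ((((k : ℝ) * T / m) ^ α * (Nbar : ℝ)) / S) : ℝ)) ^ (1 / D)
        ≤ ((k : ℝ) * T / m) ^ α * (S / Nbar) ^ (1 / D) := by
    intro k hk
    set τ : ℝ := (k : ℝ) * T / m with hτdef
    have hτ0 : 0 < τ := ht0 k hk
    set x : ℝ := τ ^ α * (Nbar : ℝ) / S with hxdef
    have hx0 : 0 < x := div_pos (mul_pos (Real.rpow_pos_of_pos hτ0 α) hN0) hS0
    have hceil : x ≤ (Nat.ceil x : ℝ) := Nat.le_ceil x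
    have hpow : x ^ (1/D) ≤ ((Nat.ceil x : ℝ)) ^ (1/D) :=
      Real.rpow_le_rpow hx0.le hceil (by positivity)
    have hxp : 0 < x ^ (1/D) := Real.rpow_pos_of_pos hx0 _
    have step1 : Real.sqrt τ / ((Nat.ceil x : ℝ)) ^ (1/D)
        ≤ Real.sqrt τ / x ^ (1/D) :=
      div_le_div_of_nonneg_left (Real.sqrt_nonneg _) hxp hpow
    have hsq : Real.sqrt τ = τ ^ α * τ ^ (α / D) := by
      rw [← Real.rpow_add hτ0, hαD, Real.sqrt_eq_rpow]
    have hA : 0 < τ ^ (α / D) := Real.rpow_pos_of_pos hτ0 _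
    have hY : 0 < ((Nbar : ℝ) / S) ^ (1/D) :=
      Real.rpow_pos_of_pos (div_pos hN0 hS0) _
    have h1 : x ^ (1/D) = τ ^ (α / D) * ((Nbar : ℝ) / S) ^ (1/D) := by
      have hx' : x = τ ^ α * ((Nbar : ℝ) / S) := by rw [hxdef]; ring
      rw [hx', Real.mul_rpow (by positivity) (by positivity),
        ← Real.rpow_mul hτ0.le, mul_one_div]
    have hinv : (((Nbar : ℝ) / S) ^ (1/D))⁻¹ = (S / (Nbar : ℝ)) ^ (1/D) := by
      rw [← Real.inv_rpow (by positivity), inv_div]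
    have step2 : Real.sqrt τ / x ^ (1/D) = τ ^ α * (S / Nbar) ^ (1/D) := by
      rw [hsq, h1, mul_comm (τ ^ (α/D)) (((Nbar:ℝ)/S) ^ (1/D)),
        mul_div_mul_right _ _ hA.ne', div_eq_mul_inv, hinv]
    exact le_trans step1 (le_of_eq step2)
  calc (∑ k ∈ Finset.Icc 1 m,
        Real.sqrt ((k : ℝ) * T / m) /
          ((Nat.ceil ((((k : ℝ) * T / m) ^ α * (Nbar : ℝ)) / S) : ℝ)) ^ (1 / D))
      ≤ ∑ k ∈ Finset.Icc 1 m, ((k : ℝ) * T / m) ^ α * (S / Nbar) ^ (1 / D) :=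
        Finset.sum_le_sum key
    _ = S * (S / Nbar) ^ (1 / D) := by rw [← Finset.sum_mul]
    _ ≤ C ^ 2 * m / (((Nbar : ℝ) / m) ^ (1 / D)) := by
        rw [Real.div_rpow hS0.le hN0.le, Real.div_rpow hN0.le hm0.le,
          div_div_eq_mul_div, ← mul_div_assoc]
        gcongr ?_ / _
        have e1 : S * S ^ (1/D) = S ^ (1 + 1/D) := by
          rw [Real.rpow_add hS0, Real.rpow_one]
        have e2 : (m:ℝ) * (m:ℝ) ^ (1/D) = (m:ℝ) ^ (1 + 1/D) := by
          rw [Real.rpow_add hm0, Real.rpow_one]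
        calc S * S ^ (1/D) = S ^ (1 + 1/D) := e1
          _ ≤ (C * m) ^ (1 + 1/D) :=
            Real.rpow_le_rpow hS0.le hSm (by positivity)
          _ = C ^ (1 + 1/D) * (m:ℝ) ^ (1 + 1/D) :=
            Real.mul_rpow hC0.le hm0.le
          _ ≤ C ^ 2 * ((m:ℝ) * (m:ℝ) ^ (1/D)) := by
            rw [e2]
            apply mul_le_mul_of_nonneg_right ?_ (by positivity)
            calc C ^ (1 + 1/D) ≤ C ^ (2:ℝ) := by
                  apply Real.rpow_le_rpow_of_exponent_le hC1
                  have : 1/D ≤ 1 := by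
                    rw [div_le_one hD0]; exact hD1
                  linarith
              _ = C ^ 2 := by
                  rw [← Real.rpow_natCast C 2]; norm_num
          _ = C ^ 2 * m * (m:ℝ) ^ (1/D) := by ring
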